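/- Assume s̄ ≠ 0, val(P(s̄)) ∈ ℝ, ν is lower semi-continuous at s̄, and Sol(D(s̄)) ≠ ∅. Let λ ∈ Y and r > 0. Then: (i) dist(λ − α s̄, Sol(D(s̄))) ≤ dist(λ, Sol(D(s̄))) for all α ≥ 0; (ii) P_{rθ}(λ) = P_{rθ_{s̄}}(λ − r s̄), where θ_{s̄}(λ) = θ(λ) − ⟨s̄, λ⟩; (iii) dist(P_{rθ}(λ), Sol(D(s̄))) ≤ dist(λ, Sol(D(s̄))). -/

import Mathlib

open Set Filter Topology Bornology Metric
open scoped RealInnerProductSpace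

noncomputable section

variable {E : Type*} [NormedAddCommGroup E] [InnerProductSpace ℝ E]
variable {Y : Type*} [NormedAddCommGroup Y] [InnerProductSpace ℝ Y]

/-- The set of feasible shifts `S = {s | ∃ x, g x + s ∈ K}`. -/
def feasShifts (g : E → Y) (K : Set Y) : Set Y := {s | ∃ x, g x + s ∈ K}

/-- The graph of the set-valued mapping `G_K(x) = -g(x) + K`,
i.e. `{(x, y) | g x + y ∈ K}`. -/
def gphGK (g : E → Y) (K : Set Y) : Set (E × Y) := {p | g p.1 + p.2 ∈ K}

/-- Recession cone of a convex set. -/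
def recCone {Z : Type*} [AddCommGroup Z] [Module ℝ Z] (C : Set Z) : Set Z :=
  {d | ∀ z ∈ C, ∀ t : ℝ, 0 ≤ t → z + t • d ∈ C}

/-- Horizon (recession) function of a finite-valued function `f`. -/
def horizonFn (f : E → ℝ) (h : E) : EReal :=
  ⨆ t : {t : ℝ // 0 < t}, (((f ((t : ℝ) • h) - f 0) / (t : ℝ) : ℝ) : EReal)

/-- The optimal value function `ν(s) = inf {f x : g x + s ∈ K}` of the shifted problem. -/
def valFn (f : E → ℝ) (g : E → Y) (K : Set Y) (s : Y) : EReal :=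
  sInf ((fun x => (f x : EReal)) '' {x | g x + s ∈ K})

/-- The solution set `X(s)` of the shifted problem. -/
def solSet (f : E → ℝ) (g : E → Y) (K : Set Y) (s : Y) : Set E :=
  {x | g x + s ∈ K ∧ ∀ x', g x' + s ∈ K → f x ≤ f x'}

/-- The Lagrangian `l(x,y,λ) = f x + ⟨λ, g x - y⟩`. -/
def lagr (f : E → ℝ) (g : E → Y) (x : E) (y : Y) (l : Y) : ℝ :=
  f x + ⟪l, g x - y⟫

/-- The augmented Lagrangian `l_r(x,y,λ) = f x + ⟨λ, g x - y⟩ + (r/2)‖g x - y‖²`. -/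
def auglagr (f : E → ℝ) (g : E → Y) (r : ℝ) (x : E) (y : Y) (l : Y) : ℝ :=
  f x + ⟪l, g x - y⟫ + r / 2 * ‖g x - y‖ ^ 2

/-- The dual function `θ(λ) = - inf {l(x,y,λ) : x ∈ ℝⁿ, y ∈ K}`. -/
def dualFn (f : E → ℝ) (g : E → Y) (K : Set Y) (l : Y) : EReal :=
  - sInf ((fun p : E × Y => ((lagr f g p.1 p.2 l : ℝ) : EReal)) '' {p | p.2 ∈ K})

/-- Fenchel conjugate of an extended-real-valued function. -/
def econj (h : Y → EReal) (l : Y) : EReal := ⨆ s : Y, (⟪l, s⟫ : EReal) - h s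

/-- Convex subdifferential of an extended-real-valued function. -/
def esubdiff (h : Y → EReal) (s : Y) : Set Y :=
  {l | ∀ s', h s + (⟪l, s' - s⟫ : EReal) ≤ h s'}

/-- Convexity of an extended-real-valued function, via its epigraph. -/
def ERealConvexOn (h : Y → EReal) : Prop :=
  Convex ℝ {p : Y × ℝ | h p.1 ≤ (p.2 : EReal)}

/-- Properness of an extended-real-valued function. -/
def ERealProper (h : Y → EReal) : Prop := (∀ s, h s ≠ ⊥) ∧ ∃ s, h s ≠ ⊤

/-- The optimal value `val(D(s)) = sup_λ [⟨s,λ⟩ - θ(λ)]` of the dual problem `D(s)`. -/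
def dualVal (f : E → ℝ) (g : E → Y) (K : Set Y) (s : Y) : EReal :=
  ⨆ l : Y, (⟪s, l⟫ : EReal) - dualFn f g K l

/-- The solution set `Sol(D(s))` of the dual problem `D(s)`. -/
def dualSol (f : E → ℝ) (g : E → Y) (K : Set Y) (s : Y) : Set Y :=
  {l | ∀ l', (⟪s, l'⟫ : EReal) - dualFn f g K l' ≤ (⟪s, l⟫ : EReal) - dualFn f g K l}

/-- The set of proximal points `argmin_{λ'} [h(λ') + ‖λ' - λ‖²/(2r)]`. -/
def proxSet (h : Y → EReal) (r : ℝ) (l : Y) : Set Y :=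
  {m | ∀ m', h m + ((‖m - l‖ ^ 2 / (2 * r) : ℝ) : EReal) ≤
      h m' + ((‖m' - l‖ ^ 2 / (2 * r) : ℝ) : EReal)}

/-- The Moreau–Yosida regularization `h_r(λ) = inf_{λ'} [h(λ') + ‖λ' - λ‖²/(2r)]`. -/
def moreau (h : Y → EReal) (r : ℝ) (l : Y) : EReal :=
  ⨅ m : Y, (h m + ((‖m - l‖ ^ 2 / (2 * r) : ℝ) : EReal))

section Aux

variable (f : E → ℝ) (g : E → Y) (K : Set Y)

lemma neg_lagr_le_dualFn (l : Y) {x : E} {y : Y} (hy : y ∈ K) :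
    ((-(lagr f g x y l) : ℝ) : EReal) ≤ dualFn f g K l := by
  rw [dualFn, EReal.coe_neg]
  exact EReal.neg_le_neg_iff.2 (sInf_le ⟨(x, y), hy, rfl⟩)

lemma dualFn_le {l : Y} {c : ℝ} (h : ∀ x y, y ∈ K → c ≤ lagr f g x y l) :
    dualFn f g K l ≤ ((-c : ℝ) : EReal) := by
  rw [dualFn, EReal.coe_neg]
  refine EReal.neg_le_neg_iff.2 (le_sInf ?_)
  rintro b ⟨⟨x, y⟩, hy, rfl⟩
  dsimp only
  exact_mod_cast h x y hy

lemma lagr_le_of_dualFn_le {l : Y} {c : ℝ} (h : dualFn f g K l ≤ (c : EReal))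
    {x : E} {y : Y} (hy : y ∈ K) : -c ≤ lagr f g x y l := by
  have h1 := (neg_lagr_le_dualFn f g K l (x := x) hy).trans h
  have h2 : -(lagr f g x y l) ≤ c := by exact_mod_cast h1
  linarith

lemma dualFn_ne_bot [Nonempty E] (hKne : K.Nonempty) (l : Y) : dualFn f g K l ≠ ⊥ := by
  obtain ⟨y, hy⟩ := hKne
  exact ((EReal.bot_lt_coe _).trans_le
    (neg_lagr_le_dualFn f g K l (x := Classical.arbitrary E) hy)).ne'

/-- Key monotonicity: shifting the dual variable by `-α • sbar` decreases `θ`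
by at least `α ‖sbar‖²`. -/
lemma dualFn_shift [Nonempty E] (hKne : K.Nonempty) {sbar : Y}
    (hS : ∀ s ∈ feasShifts g K, ‖sbar‖ ^ 2 ≤ ⟪sbar, s⟫) (l : Y) {α : ℝ} (hα : 0 ≤ α) :
    dualFn f g K (l - α • sbar) + ((α * ‖sbar‖ ^ 2 : ℝ) : EReal) ≤ dualFn f g K l := by
  rcases eq_or_ne (dualFn f g K l) ⊤ with h | h
  · rw [h]; exact le_top
  obtain ⟨c, hc⟩ : ∃ c : ℝ, dualFn f g K l = (c : EReal) :=
    ⟨_, (EReal.coe_toReal h (dualFn_ne_bot f g K hKne l)).symm⟩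
  have hlag : ∀ x y, y ∈ K → -c + α * ‖sbar‖ ^ 2 ≤ lagr f g x y (l - α • sbar) := by
    intro x y hy
    have h1 : -c ≤ lagr f g x y l := lagr_le_of_dualFn_le f g K hc.le hy
    have hmem : y - g x ∈ feasShifts g K := ⟨x, by simpa using hy⟩
    have h2 := hS _ hmem
    have heq : lagr f g x y (l - α • sbar) = lagr f g x y l + α * ⟪sbar, y - g x⟫ := by
      simp only [lagr, inner_sub_left, inner_sub_right, real_inner_smul_left]
      ring
    rw [heq]
    nlinarith [mul_le_mul_of_nonneg_left h2 hα]
  have h3 := dualFn_le f g K hlag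
  calc dualFn f g K (l - α • sbar) + ((α * ‖sbar‖ ^ 2 : ℝ) : EReal)
      ≤ ((-(-c + α * ‖sbar‖ ^ 2) : ℝ) : EReal) + ((α * ‖sbar‖ ^ 2 : ℝ) : EReal) :=
        add_le_add_left h3 _
    _ = (c : EReal) := by rw [← EReal.coe_add]; norm_num
    _ = dualFn f g K l := hc.symm

/-- Convexity of the dual function along segments. -/
lemma dualFn_convex_seg (u μ : Y) {t cu cm : ℝ} (ht0 : 0 ≤ t) (ht1 : t ≤ 1)
    (hu : dualFn f g K u ≤ (cu : EReal)) (hm : dualFn f g K μ ≤ (cm : EReal)) :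
    dualFn f g K (u + t • (μ - u)) ≤ (((1 - t) * cu + t * cm : ℝ) : EReal) := by
  have h := dualFn_le f g K (l := u + t • (μ - u)) (c := -((1 - t) * cu + t * cm)) ?_
  · rwa [neg_neg] at h
  intro x y hy
  have h1 : -cu ≤ lagr f g x y u := lagr_le_of_dualFn_le f g K hu hy
  have h2 : -cm ≤ lagr f g x y μ := lagr_le_of_dualFn_le f g K hm hy
  have he : lagr f g x y (u + t • (μ - u))
      = (1 - t) * lagr f g x y u + t * lagr f g x y μ := by
    simp only [lagr, inner_add_left, real_inner_smul_left, inner_sub_left]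
    ring
  rw [he]
  nlinarith

/-- The minimal norm element of the (convex) set of feasible shifts satisfies
`⟪sbar, s⟫ ≥ ‖sbar‖²` for every feasible shift `s`. -/
lemma sbar_inner_ge (hgraph : Convex ℝ (gphGK g K)) {sbar : Y}
    (hsbarS : sbar ∈ feasShifts g K)
    (hmin : ∀ s ∈ feasShifts g K, ‖sbar‖ ≤ ‖s‖) :
    ∀ s ∈ feasShifts g K, ‖sbar‖ ^ 2 ≤ ⟪sbar, s⟫ := by
  have hSconv : Convex ℝ (feasShifts g K) := by
    have himg : feasShifts g K = (LinearMap.snd ℝ E Y) '' gphGK g K := by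
      ext s
      constructor
      · rintro ⟨x, hx⟩; exact ⟨(x, s), hx, rfl⟩
      · rintro ⟨⟨x, y⟩, hp, rfl⟩; exact ⟨x, hp⟩
    rw [himg]
    exact hgraph.linear_image _
  haveI : Nonempty (feasShifts g K) := ⟨⟨sbar, hsbarS⟩⟩
  have hinf : ‖(0 : Y) - sbar‖ = ⨅ w : feasShifts g K, ‖(0 : Y) - w‖ := by
    refine le_antisymm (le_ciInf fun w => by simpa using hmin w w.2) ?_
    have hb : BddBelow (Set.range fun w : feasShifts g K => ‖(0 : Y) - (w : Y)‖) := by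
      refine ⟨0, ?_⟩
      rintro b ⟨w, rfl⟩
      positivity
    exact ciInf_le hb ⟨sbar, hsbarS⟩
  have hchar := (norm_eq_iInf_iff_real_inner_le_zero hSconv hsbarS).1 hinf
  intro s hs
  have h := hchar s hs
  rw [zero_sub, inner_neg_left, inner_sub_right, real_inner_self_eq_norm_sq] at h
  linarith

end Aux

/-- Proposition 4.4: (i) moving in the direction `-s̄` does not
increase the distance to `Sol(D(s̄))`; (ii) `P_{rθ}(λ) = P_{rθ_{s̄}}(λ - r s̄)`;
(iii) a proximal step does not increase the distance to `Sol(D(s̄))`. -/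
theorem prox_dist_properties {n : ℕ} {Y : Type*} [NormedAddCommGroup Y]
    [InnerProductSpace ℝ Y] [FiniteDimensional ℝ Y]
    (f : EuclideanSpace ℝ (Fin n) → ℝ) (g : EuclideanSpace ℝ (Fin n) → Y) (K : Set Y)
    (hfconv : ConvexOn ℝ Set.univ f)
    (hKne : K.Nonempty) (hKclosed : IsClosed K) (hKconv : Convex ℝ K)
    (hgraph : Convex ℝ (gphGK g K))
    (hSclosed : IsClosed (feasShifts g K))
    (sbar : Y) (hsbarS : sbar ∈ feasShifts g K)
    (hsbarmin : ∀ s ∈ feasShifts g K, ‖sbar‖ ≤ ‖s‖)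
    (hsbarne : sbar ≠ 0)
    (hval : ∃ v : ℝ, valFn f g K sbar = (v : EReal))
    (hlsc : LowerSemicontinuousAt (valFn f g K) sbar)
    (hSolne : (dualSol f g K sbar).Nonempty)
    (l : Y) (r : ℝ) (hr : 0 < r) :
    -- (i)
    (∀ α : ℝ, 0 ≤ α →
      Metric.infDist (l - α • sbar) (dualSol f g K sbar) ≤
        Metric.infDist l (dualSol f g K sbar)) ∧
    -- (ii)
    (proxSet (dualFn f g K) r l =
      proxSet (fun l' => dualFn f g K l' - ((⟪sbar, l'⟫ : ℝ) : EReal)) r (l - r • sbar)) ∧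
    -- (iii)
    (∀ u ∈ proxSet (dualFn f g K) r l,
      Metric.infDist u (dualSol f g K sbar) ≤ Metric.infDist l (dualSol f g K sbar)) := by
  
  classical
  have hS2 : ∀ s ∈ feasShifts g K, ‖sbar‖ ^ 2 ≤ ⟪sbar, s⟫ :=
    sbar_inner_ge g K hgraph hsbarS hsbarmin
  have hbot : ∀ l' : Y, dualFn f g K l' ≠ ⊥ := dualFn_ne_bot f g K hKne
  have hreal : ∀ l' : Y, dualFn f g K l' ≠ ⊤ → ∃ c : ℝ, dualFn f g K l' = (c : EReal) :=
    fun l' h => ⟨_, (EReal.coe_toReal h (hbot l')).symm⟩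
  have hcoesubtop : ∀ c : ℝ, ((c : EReal) - ⊤) = ⊥ := fun c => by
    rw [sub_eq_add_neg]; simp
  -- the dual solution set recedes in direction `-sbar`
  have hsolshift : ∀ μ ∈ dualSol f g K sbar, ∀ α : ℝ, 0 ≤ α →
      μ - α • sbar ∈ dualSol f g K sbar := by
    intro μ hμ α hα l'
    refine (hμ l').trans ?_
    have hip : ⟪sbar, μ - α • sbar⟫ = ⟪sbar, μ⟫ - α * ‖sbar‖ ^ 2 := by
      rw [inner_sub_right, real_inner_smul_right, real_inner_self_eq_norm_sq]
    rcases eq_or_ne (dualFn f g K μ) ⊤ with h | h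
    · rw [h, hcoesubtop]
      exact bot_le
    · obtain ⟨b, hb⟩ := hreal μ h
      have key := dualFn_shift f g K hKne hS2 μ hα
      have h'top : dualFn f g K (μ - α • sbar) ≠ ⊤ := by
        intro hT
        rw [hT, hb, EReal.top_add_coe] at key
        exact (EReal.coe_lt_top b).not_ge key
      obtain ⟨b', hb'⟩ := hreal _ h'top
      rw [hb, hb'] at key ⊢
      rw [← EReal.coe_add] at key
      have hbb : b' + α * ‖sbar‖ ^ 2 ≤ b := by exact_mod_cast key
      rw [hip, ← EReal.coe_sub, ← EReal.coe_sub]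
      have : ⟪sbar, μ⟫ - b ≤ ⟪sbar, μ⟫ - α * ‖sbar‖ ^ 2 - b' := by linarith
      exact_mod_cast this
  have hMne : (dualSol f g K sbar).Nonempty := hSolne
  haveI : Nonempty (dualSol f g K sbar) := hMne.to_subtype
  have hdist_mono : ∀ (z : Y) (α : ℝ), 0 ≤ α →
      Metric.infDist (z - α • sbar) (dualSol f g K sbar) ≤
        Metric.infDist z (dualSol f g K sbar) := by
    intro z α hα
    rw [show Metric.infDist z (dualSol f g K sbar)
        = ⨅ μ : dualSol f g K sbar, dist z μ from Metric.infDist_eq_iInf]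
    refine le_ciInf fun μ => ?_
    calc Metric.infDist (z - α • sbar) (dualSol f g K sbar)
        ≤ dist (z - α • sbar) ((μ : Y) - α • sbar) :=
          Metric.infDist_le_dist_of_mem (hsolshift μ μ.2 α hα)
      _ = dist z (μ : Y) := by rw [dist_eq_norm, dist_eq_norm]; congr 1; abel
  -- part (ii)
  have hrealid : ∀ m : Y, -⟪sbar, m⟫ + ‖m - (l - r • sbar)‖ ^ 2 / (2 * r)
      = ‖m - l‖ ^ 2 / (2 * r) + (r * ‖sbar‖ ^ 2 / 2 - ⟪l, sbar⟫) := by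
    intro m
    have hveq : m - (l - r • sbar) = (m - l) + r • sbar := by abel
    rw [hveq, norm_add_sq_real, real_inner_smul_right, norm_smul, Real.norm_eq_abs,
      inner_sub_left, real_inner_comm sbar m, mul_pow, sq_abs]
    field_simp
    ring
  have hkey : ∀ m : Y,
      dualFn f g K m - ((⟪sbar, m⟫ : ℝ) : EReal)
          + ((‖m - (l - r • sbar)‖ ^ 2 / (2 * r) : ℝ) : EReal)
        = (dualFn f g K m + ((‖m - l‖ ^ 2 / (2 * r) : ℝ) : EReal))
          + (((r * ‖sbar‖ ^ 2 / 2 - ⟪l, sbar⟫ : ℝ)) : EReal) := by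
    intro m
    rcases eq_or_ne (dualFn f g K m) ⊤ with h | h
    · rw [h]
      rw [sub_eq_add_neg, ← EReal.coe_neg, EReal.top_add_coe, EReal.top_add_coe,
        EReal.top_add_coe, EReal.top_add_coe]
    · obtain ⟨c, hc⟩ := hreal m h
      rw [hc, ← EReal.coe_sub, ← EReal.coe_add, ← EReal.coe_add, ← EReal.coe_add]
      have := hrealid m
      norm_cast
      linarith
  have part2 : proxSet (dualFn f g K) r l =
      proxSet (fun l' => dualFn f g K l' - ((⟪sbar, l'⟫ : ℝ) : EReal)) r (l - r • sbar) := by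
    ext m
    simp only [proxSet, Set.mem_setOf_eq]
    constructor
    · intro H m'
      rw [hkey m, hkey m']
      exact add_le_add_left (H m') _
    · intro H m'
      have h2 := H m'
      rw [hkey m, hkey m'] at h2
      exact ((EReal.addLECancellable_coe _).add_le_add_iff_right).1 h2
  refine ⟨fun α hα => hdist_mono l α hα, part2, ?_⟩
  -- part (iii)
  intro u hu
  obtain ⟨lam, hlam⟩ := hMne
  rcases eq_or_ne (dualFn f g K lam) ⊤ with htop | htop
  · -- degenerate case: θ ≡ ⊤ and the dual solution set is everything
    have hthetaall : ∀ l' : Y, dualFn f g K l' = ⊤ := by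
      intro l'
      by_contra hne
      obtain ⟨c, hc⟩ := hreal l' hne
      have h2 := hlam l'
      rw [htop, hc, ← EReal.coe_sub, hcoesubtop] at h2
      exact (EReal.bot_lt_coe _).not_ge h2
    have hall : u ∈ dualSol f g K sbar := by
      intro l'
      rw [hthetaall l', hthetaall u, hcoesubtop, hcoesubtop]
    rw [Metric.infDist_zero_of_mem hall]
    exact Metric.infDist_nonneg
  · obtain ⟨clam, hclam⟩ := hreal lam htop
    have hMreal : ∀ μ ∈ dualSol f g K sbar, dualFn f g K μ ≠ ⊤ := by
      intro μ hμ hT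
      have h2 := hμ lam
      rw [hT, hclam, ← EReal.coe_sub, hcoesubtop] at h2
      exact (EReal.bot_lt_coe _).not_ge h2
    have hu2 : u ∈ proxSet (fun l' => dualFn f g K l' - ((⟪sbar, l'⟫ : ℝ) : EReal)) r
        (l - r • sbar) := part2 ▸ hu
    simp only [proxSet, Set.mem_setOf_eq] at hu2
    set p := l - r • sbar with hp
    have hutop : dualFn f g K u ≠ ⊤ := by
      intro hT
      have h2 := hu2 lam
      rw [hT, hclam, ← EReal.coe_sub, sub_eq_add_neg (⊤ : EReal), ← EReal.coe_neg,
        EReal.top_add_coe, EReal.top_add_coe, ← EReal.coe_add] at h2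
      exact (EReal.coe_lt_top _).not_ge h2
    obtain ⟨cu, hcu⟩ := hreal u hutop
    have hmin : ∀ μ ∈ dualSol f g K sbar, ∀ (cμ cm : ℝ) (m : Y),
        dualFn f g K μ = (cμ : EReal) → dualFn f g K m = (cm : EReal) →
        cμ - ⟪sbar, μ⟫ ≤ cm - ⟪sbar, m⟫ := by
      intro μ hμ cμ cm m h1 h2
      have h3 := hμ m
      rw [h1, h2, ← EReal.coe_sub, ← EReal.coe_sub] at h3
      have h4 : ⟪sbar, m⟫ - cm ≤ ⟪sbar, μ⟫ - cμ := by exact_mod_cast h3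
      linarith
    have key : ∀ μ ∈ dualSol f g K sbar, ‖u - μ‖ ≤ ‖p - μ‖ := by
      intro μ hμ
      obtain ⟨cμ, hcμ⟩ := hreal μ (hMreal μ hμ)
      have hI : 0 ≤ ⟪u - p, μ - u⟫ := by
        by_contra hIneg
        push_neg at hIneg
        have hne : μ - u ≠ 0 := by
          intro h0
          rw [h0, inner_zero_right] at hIneg
          exact lt_irrefl 0 hIneg
        have hnorm : 0 < ‖μ - u‖ ^ 2 := pow_pos (norm_pos_iff.2 hne) 2
        set t : ℝ := min 1 (-⟪u - p, μ - u⟫ / ‖μ - u‖ ^ 2) with htdef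
        have ht0 : 0 < t := lt_min one_pos (div_pos (neg_pos.2 hIneg) hnorm)
        have ht1 : t ≤ 1 := min_le_left _ _
        have htle : t * ‖μ - u‖ ^ 2 ≤ -⟪u - p, μ - u⟫ := by
          have hmr := min_le_right 1 (-⟪u - p, μ - u⟫ / ‖μ - u‖ ^ 2)
          calc t * ‖μ - u‖ ^ 2 ≤ (-⟪u - p, μ - u⟫ / ‖μ - u‖ ^ 2) * ‖μ - u‖ ^ 2 :=
                mul_le_mul_of_nonneg_right hmr hnorm.le
            _ = -⟪u - p, μ - u⟫ := by field_simp
        have hmt := hu2 (u + t • (μ - u))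
        have hconv := dualFn_convex_seg f g K u μ ht0.le ht1 hcu.le hcμ.le
        have hmttop : dualFn f g K (u + t • (μ - u)) ≠ ⊤ := by
          intro hT
          rw [hT] at hconv
          exact (EReal.coe_lt_top _).not_ge hconv
        obtain ⟨ct, hct⟩ := hreal _ hmttop
        have hctle : ct ≤ (1 - t) * cu + t * cμ := by
          rw [hct] at hconv; exact_mod_cast hconv
        rw [hcu, hct, ← EReal.coe_sub, ← EReal.coe_sub, ← EReal.coe_add,
          ← EReal.coe_add] at hmt
        have hmtreal : cu - ⟪sbar, u⟫ + ‖u - p‖ ^ 2 / (2 * r)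
            ≤ ct - ⟪sbar, u + t • (μ - u)⟫ + ‖u + t • (μ - u) - p‖ ^ 2 / (2 * r) := by
          exact_mod_cast hmt
        have hminuμ : cμ - ⟪sbar, μ⟫ ≤ cu - ⟪sbar, u⟫ := hmin μ hμ cμ cu u hcμ hcu
        have hinner_mt : ⟪sbar, u + t • (μ - u)⟫
            = ⟪sbar, u⟫ + t * (⟪sbar, μ⟫ - ⟪sbar, u⟫) := by
          rw [inner_add_right, real_inner_smul_right, inner_sub_right]
        have hnorm_mt : ‖u + t • (μ - u) - p‖ ^ 2
            = ‖u - p‖ ^ 2 + 2 * t * ⟪u - p, μ - u⟫ + t ^ 2 * ‖μ - u‖ ^ 2 := by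
          rw [show u + t • (μ - u) - p = (u - p) + t • (μ - u) by abel, norm_add_sq_real,
            real_inner_smul_right, norm_smul, Real.norm_eq_abs, mul_pow, sq_abs]
          ring
        rw [hinner_mt, hnorm_mt, add_div, add_div] at hmtreal
        have h2r : (0 : ℝ) < 2 * r := by linarith
        have h8 : 0 ≤ 2 * t * ⟪u - p, μ - u⟫ / (2 * r) + t ^ 2 * ‖μ - u‖ ^ 2 / (2 * r) := by
          nlinarith [mul_le_mul_of_nonneg_left hminuμ ht0.le]
        rw [← add_div] at h8
        have h9 : 0 ≤ 2 * t * ⟪u - p, μ - u⟫ + t ^ 2 * ‖μ - u‖ ^ 2 := by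
          have h10 := (le_div_iff₀ h2r).1 h8
          simpa using h10
        nlinarith [mul_le_mul_of_nonneg_left htle ht0.le,
          mul_pos ht0 (neg_pos.2 hIneg)]
      have hexp : ‖p - μ‖ ^ 2 = ‖p - u‖ ^ 2 + 2 * ⟪p - u, u - μ⟫ + ‖u - μ‖ ^ 2 := by
        rw [show p - μ = (p - u) + (u - μ) by abel, norm_add_sq_real]
      have hI2 : 0 ≤ ⟪p - u, u - μ⟫ := by
        rw [show p - u = -(u - p) from (neg_sub u p).symm,
          show u - μ = -(μ - u) from (neg_sub μ u).symm, inner_neg_neg]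
        exact hI
      have hsq : ‖u - μ‖ ^ 2 ≤ ‖p - μ‖ ^ 2 := by
        have := sq_nonneg ‖p - u‖
        nlinarith
      exact (pow_le_pow_iff_left₀ (norm_nonneg _) (norm_nonneg _) two_ne_zero).1 hsq
    have hfin1 : Metric.infDist u (dualSol f g K sbar) ≤
        Metric.infDist p (dualSol f g K sbar) := by
      rw [show Metric.infDist p (dualSol f g K sbar)
          = ⨅ μ : dualSol f g K sbar, dist p μ from Metric.infDist_eq_iInf]
      refine le_ciInf fun μ => ?_
      calc Metric.infDist u (dualSol f g K sbar) ≤ dist u (μ : Y) :=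
            Metric.infDist_le_dist_of_mem μ.2
        _ ≤ dist p (μ : Y) := by
            rw [dist_eq_norm, dist_eq_norm]; exact key μ μ.2
    exact hfin1.trans (hdist_mono l r hr.le)
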